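/- Let R be a principal ideal domain and I a proper ideal of R. The following are equivalent: (1) I is strongly irreducible; (2) I is irreducible; (3) I = Pⁿ for some prime ideal P of R and some integer n ≥ 1. -/

import Mathlib

section Aux

variable {R : Type*} [CommRing R] [IsDomain R] [IsPrincipalIdealRing R]

lemma aux_coprime_le {P A B : Ideal R} {m : ℕ} (hcop : A ⊔ P ^ m = ⊤)
    (h : A ⊓ B ≤ P ^ m) : B ≤ P ^ m := by
  calc B = (A ⊔ P ^ m) * B := by rw [hcop, Ideal.top_mul]
  _ = A * B ⊔ P ^ m * B := Ideal.sup_mul _ _ _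
  _ ≤ P ^ m := sup_le (le_trans Ideal.mul_le_inf h) Ideal.mul_le_left

lemma aux_inf_bot {A B : Ideal R} (h : A ⊓ B ≤ ⊥) : A ≤ ⊥ ∨ B ≤ ⊥ := by
  by_contra hc
  push_neg at hc
  obtain ⟨hA, hB⟩ := hc
  rw [le_bot_iff] at hA hB
  obtain ⟨a, ha, ha0⟩ := Submodule.exists_mem_ne_zero_of_ne_bot hA
  obtain ⟨b, hb, hb0⟩ := Submodule.exists_mem_ne_zero_of_ne_bot hB
  have hab : a * b ∈ A ⊓ B := ⟨Ideal.mul_mem_right b A ha, Ideal.mul_mem_left B a hb⟩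
  have := h hab
  simp only [Ideal.mem_bot] at this
  exact mul_ne_zero ha0 hb0 this

/-- Key lemma: powers of a prime ideal are strongly irreducible. -/
lemma aux_prime_pow_strongly_irred (P : Ideal R) (hP : P.IsPrime) (n : ℕ)
    (A B : Ideal R) (h : A ⊓ B ≤ P ^ n) : A ≤ P ^ n ∨ B ≤ P ^ n := by
  by_cases hP0 : P = ⊥
  · subst hP0
    cases n with
    | zero => left; simp
    | succ n =>
      have hb : (⊥ : Ideal R) ^ (n+1) = ⊥ := by
        rw [← Ideal.zero_eq_bot, zero_pow (Nat.succ_ne_zero n)]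
      rw [hb] at h ⊢
      exact aux_inf_bot h
  · have hPmax : P.IsMaximal := hP.isMaximal hP0
    induction n generalizing A B with
    | zero => left; simp
    | succ n ih =>
      by_cases hA : A ≤ P
      · by_cases hB : B ≤ P
        · obtain ⟨A', rfl⟩ := Ideal.dvd_iff_le.mpr hA
          obtain ⟨B', rfl⟩ := Ideal.dvd_iff_le.mpr hB
          have key : P * A' ⊓ P * B' = P * (A' ⊓ B') := by
            have h1 := lcm_mul_left P A' B'
            rwa [Ideal.lcm_eq_inf, Ideal.lcm_eq_inf, normalize_eq] at h1
          have h' : A' ⊓ B' ≤ P ^ n := by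
            rw [← Ideal.dvd_iff_le] at h ⊢
            have h2 : P * P ^ n ∣ P * (A' ⊓ B') := by
              rw [← pow_succ']; rw [key] at h; exact h
            exact (mul_dvd_mul_iff_left (by simpa [Ideal.zero_eq_bot] using hP0)).mp h2
          rcases ih A' B' h' with h3 | h3
          · left; rw [pow_succ']; exact Ideal.mul_mono_right h3
          · right; rw [pow_succ']; exact Ideal.mul_mono_right h3
        · -- B not contained in P, so B ⊔ P = ⊤, hence A ≤ P ^ (n+1)
          left
          have hsup : B ⊔ P = ⊤ := by
            by_contra hne
            exact hB (le_sup_left.trans (hPmax.eq_of_le hne le_sup_right).ge)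
          exact aux_coprime_le (Ideal.sup_pow_eq_top hsup) (inf_comm A B ▸ h)
      · right
        have hsup : A ⊔ P = ⊤ := by
          by_contra hne
          exact hA (le_sup_left.trans (hPmax.eq_of_le hne le_sup_right).ge)
        exact aux_coprime_le (Ideal.sup_pow_eq_top hsup) h

end Aux

/-- For a proper ideal `I` of a principal ideal domain the following are
equivalent: (1) `I` is strongly irreducible; (2) `I` is irreducible;
(3) `I` is a power `Pⁿ` (with `n ≥ 1`) of a prime ideal `P`. -/
theorem stmt_9 {R : Type*} [CommRing R] [IsDomain R] [IsPrincipalIdealRing R]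
    (I : Ideal R) (hI : I ≠ ⊤) :
    ((∀ A B : Ideal R, A ⊓ B ≤ I → A ≤ I ∨ B ≤ I) ↔
      (∀ A B : Ideal R, A ⊓ B = I → A = I ∨ B = I)) ∧
    ((∀ A B : Ideal R, A ⊓ B = I → A = I ∨ B = I) ↔
      (∃ (P : Ideal R) (n : ℕ), P.IsPrime ∧ 1 ≤ n ∧ I = P ^ n)) := by
  -- (1) → (2)
  have h12 : (∀ A B : Ideal R, A ⊓ B ≤ I → A ≤ I ∨ B ≤ I) →
      (∀ A B : Ideal R, A ⊓ B = I → A = I ∨ B = I) := by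
    intro h A B hAB
    rcases h A B hAB.le with h' | h'
    · exact Or.inl (le_antisymm h' (hAB ▸ inf_le_left))
    · exact Or.inr (le_antisymm h' (hAB ▸ inf_le_right))
  -- (2) → (3)
  have h23 : (∀ A B : Ideal R, A ⊓ B = I → A = I ∨ B = I) →
      (∃ (P : Ideal R) (n : ℕ), P.IsPrime ∧ 1 ≤ n ∧ I = P ^ n) := by
    intro h
    by_cases hbot : I = ⊥
    · exact ⟨⊥, 1, Ideal.bot_prime, le_refl 1, by simp [hbot]⟩
    · have hI0 : I ≠ 0 := by simpa [Ideal.zero_eq_bot] using hbot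
      have hIu : ¬IsUnit I := by rw [Ideal.isUnit_iff]; exact hI
      obtain ⟨P, hPirr, hPdvd⟩ := WfDvdMonoid.exists_irreducible_factor hIu hI0
      have hPprime : Prime P := UniqueFactorizationMonoid.irreducible_iff_prime.mp hPirr
      have hfin : FiniteMultiplicity P I :=
        FiniteMultiplicity.of_not_isUnit hPprime.not_isUnit hI0
      obtain ⟨J, hIJ, hPJ⟩ := hfin.exists_eq_pow_mul_and_not_dvd
      set n := multiplicity P I with hn
      have hn0 : n ≠ 0 := by
        intro h0
        rw [h0, pow_zero, one_mul] at hIJ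
        exact hPJ (hIJ ▸ hPdvd)
      have hPprime' : P.IsPrime := Ideal.isPrime_of_prime hPprime
      have hPbot : P ≠ ⊥ := by simpa [Ideal.zero_eq_bot] using hPprime.ne_zero
      have hPmax : P.IsMaximal := hPprime'.isMaximal hPbot
      -- P^n and J are coprime
      have hJP : ¬ J ≤ P := fun hle => hPJ (Ideal.dvd_iff_le.mpr hle)
      have hsup : J ⊔ P = ⊤ := by
        by_contra hne
        exact hJP (le_sup_left.trans (hPmax.eq_of_le hne le_sup_right).ge)
      have hsup' : P ^ n ⊔ J = ⊤ := by
        rw [sup_comm]; exact Ideal.sup_pow_eq_top hsup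
      have hinf : P ^ n ⊓ J = I := by
        rw [← Ideal.mul_eq_inf_of_coprime hsup']; exact hIJ.symm
      rcases h _ _ hinf with h' | h'
      · exact ⟨P, n, hPprime', Nat.one_le_iff_ne_zero.mpr hn0, h'.symm⟩
      · -- J = I leads to contradiction
        exfalso
        rw [h'] at hIJ
        have : P ^ n = 1 := by
          have heq : I * P ^ n = I * 1 := by rw [mul_one, mul_comm]; exact hIJ.symm
          exact mul_left_cancel₀ hI0 heq
        exact hPprime.not_isUnit (IsUnit.of_pow_eq_one this hn0)
  -- (3) → (1)
  have h31 : (∃ (P : Ideal R) (n : ℕ), P.IsPrime ∧ 1 ≤ n ∧ I = P ^ n) →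
      (∀ A B : Ideal R, A ⊓ B ≤ I → A ≤ I ∨ B ≤ I) := by
    rintro ⟨P, n, hP, -, rfl⟩ A B hAB
    exact aux_prime_pow_strongly_irred P hP n A B hAB
  exact ⟨⟨h12, fun h2 => h31 (h23 h2)⟩, ⟨h23, fun h3 => h12 (h31 h3)⟩⟩
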